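/- With the factorization construction below, the number of triples of the factorized graph satisfies the exact identity E'.card = E.card − K.card * (n + 1) + K.card + n + 1. In words, factorizing a frequent star pattern with K.card matching entities and n properties removes K.card · (n + 1) labeled edges and adds K.card + n + 1 labeled edges. -/

import Mathlib

/-- Exact count of triples of the factorized graph:
`E'.card = E.card − K.card·(n+1) + K.card + n + 1`. -/
theorem factorized_card_eq
    {α L : Type*} [DecidableEq α] [DecidableEq L]
    (E : Finset (α × L × α)) (n : ℕ) (hn : 1 ≤ n)
    (typeOf instanceOf : L) (hlabels : typeOf ≠ instanceOf)
    (p : Fin n → L) (hp : Function.Injective p)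
    (htp : typeOf ∉ Set.range p) (hip : instanceOf ∉ Set.range p)
    (c : α) (o : Fin n → α) (K : Finset α)
    (hK : ∀ s ∈ K, (s, typeOf, c) ∈ E ∧ ∀ i : Fin n, (s, p i, o i) ∈ E)
    (sg : α) (hsg : ∀ t ∈ E, t.1 ≠ sg ∧ t.2.2 ≠ sg)
    (R A E' : Finset (α × L × α))
    (hR : R = K.biUnion (fun s =>
      {(s, typeOf, c)} ∪ Finset.univ.image (fun i : Fin n => (s, p i, o i))))
    (hA : A = K.image (fun s => (s, instanceOf, sg)) ∪ {(sg, typeOf, c)} ∪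
      Finset.univ.image (fun i : Fin n => (sg, p i, o i)))
    (hE' : E' = (E \ R) ∪ A)
    : E'.card = E.card - K.card * (n + 1) + K.card + n + 1 := by
  classical
  have hmem : ∀ (s : α) (t : α × L × α),
      t ∈ ({(s, typeOf, c)} ∪ Finset.univ.image (fun i : Fin n => (s, p i, o i)) :
        Finset (α × L × α)) → t.1 = s := by
    intro s t ht
    simp only [Finset.mem_union, Finset.mem_singleton, Finset.mem_image,
      Finset.mem_univ, true_and] at ht
    rcases ht with h | ⟨i, hi⟩
    · rw [h]
    · rw [← hi]
  have hinj : ∀ s : α, Function.Injective (fun i : Fin n => (s, p i, o i)) :=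
    fun s i j hij => hp (congrArg (fun t : α × L × α => t.2.1) hij)
  -- R ⊆ E
  have hRsub : R ⊆ E := by
    subst hR
    intro t ht
    simp only [Finset.mem_biUnion, Finset.mem_union, Finset.mem_singleton, Finset.mem_image,
      Finset.mem_univ, true_and] at ht
    obtain ⟨s, hs, h | ⟨i, hi⟩⟩ := ht
    · rw [h]; exact (hK s hs).1
    · rw [← hi]; exact (hK s hs).2 i
  -- per-s set card
  have hset : ∀ s : α,
      ({(s, typeOf, c)} ∪ Finset.univ.image (fun i : Fin n => (s, p i, o i)) :
        Finset (α × L × α)).card = n + 1 := by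
    intro s
    have hd : Disjoint ({(s, typeOf, c)} : Finset (α × L × α))
        (Finset.univ.image (fun i : Fin n => (s, p i, o i))) := by
      rw [Finset.disjoint_left]
      intro t ht ht'
      simp only [Finset.mem_singleton] at ht
      simp only [Finset.mem_image, Finset.mem_univ, true_and] at ht'
      obtain ⟨i, hi⟩ := ht'
      subst ht
      exact htp ⟨i, congrArg (fun t : α × L × α => t.2.1) hi⟩
    rw [Finset.card_union_of_disjoint hd, Finset.card_singleton,
      Finset.card_image_of_injective _ (hinj s), Finset.card_univ, Fintype.card_fin]
    omega
  -- card of R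
  have hRcard : R.card = K.card * (n + 1) := by
    subst hR
    rw [Finset.card_biUnion]
    · rw [Finset.sum_congr rfl (fun s _ => hset s), Finset.sum_const, smul_eq_mul]
    · intro s _ s' _ hss
      rw [Function.onFun, Finset.disjoint_left]
      intro t ht ht'
      exact hss ((hmem s t ht) ▸ (hmem s' t ht'))
  -- card of A
  have hAcard : A.card = K.card + n + 1 := by
    subst hA
    have hinjK : Function.Injective (fun s : α => (s, instanceOf, sg)) :=
      fun a b hab => congrArg Prod.fst hab
    have hd1 : Disjoint (K.image (fun s => (s, instanceOf, sg)))
        ({(sg, typeOf, c)} : Finset (α × L × α)) := by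
      rw [Finset.disjoint_left]
      intro t ht ht'
      simp only [Finset.mem_image] at ht
      simp only [Finset.mem_singleton] at ht'
      obtain ⟨s, _, hs⟩ := ht
      subst ht'
      exact hlabels (congrArg (fun t : α × L × α => t.2.1) hs).symm
    have hd2 : Disjoint (K.image (fun s => (s, instanceOf, sg)) ∪
        ({(sg, typeOf, c)} : Finset (α × L × α)))
        (Finset.univ.image (fun i : Fin n => (sg, p i, o i))) := by
      rw [Finset.disjoint_left]
      intro t ht ht'
      simp only [Finset.mem_union, Finset.mem_image, Finset.mem_singleton] at ht
      simp only [Finset.mem_image, Finset.mem_univ, true_and] at ht'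
      obtain ⟨i, hi⟩ := ht'
      subst hi
      rcases ht with ⟨s, _, hs⟩ | h
      · exact hip ⟨i, (congrArg (fun t : α × L × α => t.2.1) hs).symm⟩
      · exact htp ⟨i, (congrArg (fun t : α × L × α => t.2.1) h)⟩
    rw [Finset.card_union_of_disjoint hd2, Finset.card_union_of_disjoint hd1,
      Finset.card_image_of_injective _ hinjK, Finset.card_singleton,
      Finset.card_image_of_injective _ (hinj sg), Finset.card_univ, Fintype.card_fin]
    omega
  -- A disjoint from E \ R
  have hdisj : Disjoint (E \ R) A := by
    rw [Finset.disjoint_right]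
    intro t ht ht'
    have htE : t ∈ E := (Finset.mem_sdiff.mp ht').1
    have hne := hsg t htE
    subst hA
    simp only [Finset.mem_union, Finset.mem_image, Finset.mem_singleton,
      Finset.mem_univ, true_and] at ht
    rcases ht with (⟨s, _, hs⟩ | h) | ⟨i, hi⟩
    · subst hs; exact hne.2 rfl
    · subst h; exact hne.1 rfl
    · subst hi; exact hne.1 rfl
  have hRcardle : K.card * (n + 1) ≤ E.card := by
    rw [← hRcard]; exact Finset.card_le_card hRsub
  subst hE'
  rw [Finset.card_union_of_disjoint hdisj, Finset.card_sdiff_of_subset hRsub, hRcard, hAcard]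
  omega
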